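/- In the Kripke model M_k (a chain of 2k looped states alternating ¬p/p attached to a root r_k satisfying p, with a looped ¬p state b also accessible from the root), the single-variable CTL formula A_m = χ_m ∧ EX AG ¬p is true at a state x of M_k if and only if k = m and x = r_k, where χ₀ = ∀□p and χ_{k+1} = p ∧ EX(¬p ∧ EX χ_k). -/

import Mathlib

/-- CTL formulas: variables, falsehood, implication, AX, ∀U, ∃U. -/
inductive CTL : Type where
  | var : ℕ → CTL
  | bot : CTL
  | imp : CTL → CTL → CTL
  | ax : CTL → CTL
  | au : CTL → CTL → CTL
  | eu : CTL → CTL → CTL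

namespace CTL
def neg (φ : CTL) : CTL := imp φ bot
def top : CTL := imp bot bot
def conj (φ ψ : CTL) : CTL := neg (imp φ (neg ψ))
def iffc (φ ψ : CTL) : CTL := conj (imp φ ψ) (imp ψ φ)
def ex (φ : CTL) : CTL := neg (ax (neg φ))
def ef (φ : CTL) : CTL := eu top φ
def ag (φ : CTL) : CTL := neg (ef (neg φ))
end CTL

/-- Serial Kripke models. -/
structure Kripke (S : Type) where
  rel : S → S → Prop
  serial : ∀ s, ∃ t, rel s t
  val : ℕ → S → Prop

def isPath {S : Type} (M : Kripke S) (π : ℕ → S) : Prop :=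
  ∀ i, M.rel (π i) (π (i + 1))

/-- CTL satisfaction over serial Kripke models. -/
def sat {S : Type} (M : Kripke S) : CTL → S → Prop
  | .var n, s => M.val n s
  | .bot, _ => False
  | .imp a b, s => sat M a s → sat M b s
  | .ax a, s => ∀ t, M.rel s t → sat M a t
  | .au a b, s => ∀ π, isPath M π → π 0 = s →
      ∃ i, sat M b (π i) ∧ ∀ j, j < i → sat M a (π j)
  | .eu a b, s => ∃ π, isPath M π ∧ π 0 = s ∧
      ∃ i, sat M b (π i) ∧ ∀ j, j < i → sat M a (π j)

def satisfiable (φ : CTL) : Prop := ∃ (S : Type) (M : Kripke S) (s : S), sat M φ s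
def valid (φ : CTL) : Prop := ∀ (S : Type) (M : Kripke S) (s : S), sat M φ s

/-- Variable q occurs in a formula. -/
def occurs (q : ℕ) : CTL → Prop
  | .var n => n = q
  | .bot => False
  | .imp a b => occurs q a ∨ occurs q b
  | .ax a => occurs q a
  | .au a b => occurs q a ∨ occurs q b
  | .eu a b => occurs q a ∨ occurs q b

/-- Uniform substitution of ψ for variable p. -/
def subst (p : ℕ) (ψ : CTL) : CTL → CTL
  | .var n => if n = p then ψ else .var n
  | .bot => .bot
  | .imp a b => .imp (subst p ψ a) (subst p ψ b)
  | .ax a => .ax (subst p ψ a)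
  | .au a b => .au (subst p ψ a) (subst p ψ b)
  | .eu a b => .eu (subst p ψ a) (subst p ψ b)

/-- The relativizing translation ·' with guard variable q. -/
def relTr (q : ℕ) : CTL → CTL
  | .var n => .var n
  | .bot => .bot
  | .imp a b => .imp (relTr q a) (relTr q b)
  | .ax a => .ax (.imp (.var q) (relTr q a))
  | .au a b => .au (relTr q a) (CTL.conj (.var q) (relTr q b))
  | .eu a b => .eu (relTr q a) (CTL.conj (.var q) (relTr q b))

/-- Θ = q ∧ AG(EX q ↔ q). -/
def Theta (q : ℕ) : CTL :=
  CTL.conj (.var q) (CTL.ag (CTL.iffc (CTL.ex (.var q)) (.var q)))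

/-- Transition relation of the chain model M_m: state 0 = root r_m, state 1 = b^m,
state i+1 = a_i for 1 ≤ i ≤ 2m; self-loops everywhere. -/
def chainRel (m : ℕ) (s t : Fin (2 * m + 2)) : Prop :=
  (s.val = 0 ∧ (t.val = 1 ∨ t.val = 2)) ∨
  (2 ≤ s.val ∧ s.val ≤ 2 * m ∧ t.val = s.val + 1) ∨
  t = s

/-- p is true exactly at the root and the even-indexed chain states a_{2j}. -/
def chainVal (m : ℕ) (s : Fin (2 * m + 2)) : Prop :=
  s.val = 0 ∨ (3 ≤ s.val ∧ s.val % 2 = 1)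

def chainModel (m : ℕ) : Kripke (Fin (2 * m + 2)) where
  rel := chainRel m
  serial := fun s => ⟨s, Or.inr (Or.inr rfl)⟩
  val := fun n s => n = 0 ∧ chainVal m s

def chainRoot (m : ℕ) : Fin (2 * m + 2) := ⟨0, by omega⟩

/-- χ₀ = ∀□p, χ_{k+1} = p ∧ EX(¬p ∧ EX χ_k); the single variable p is var 0. -/
def chi : ℕ → CTL
  | 0 => CTL.ag (.var 0)
  | k + 1 => CTL.conj (.var 0) (CTL.ex (CTL.conj (CTL.neg (.var 0)) (CTL.ex (chi k))))

/-- A_m = χ_m ∧ EX AG ¬p. -/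
def Aform (m : ℕ) : CTL := CTL.conj (chi m) (CTL.ex (CTL.ag (CTL.neg (.var 0))))

/-- B_m = EX A_m. -/
def Bform (m : ℕ) : CTL := CTL.ex (Aform m)

/-- The substitution σ : pᵢ ↦ Bᵢ for 1 ≤ i ≤ n+1. -/
def sigmaSub (n : ℕ) : CTL → CTL
  | .var i => if 1 ≤ i ∧ i ≤ n + 1 then Bform i else .var i
  | .bot => .bot
  | .imp a b => .imp (sigmaSub n a) (sigmaSub n b)
  | .ax a => .ax (sigmaSub n a)
  | .au a b => .au (sigmaSub n a) (sigmaSub n b)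
  | .eu a b => .eu (sigmaSub n a) (sigmaSub n b)


open Relation

section Aux

lemma sat_neg' {S} (M : Kripke S) (a : CTL) (s : S) :
    sat M (CTL.neg a) s ↔ ¬ sat M a s := Iff.rfl

lemma sat_conj' {S} (M : Kripke S) (a b : CTL) (s : S) :
    sat M (CTL.conj a b) s ↔ sat M a s ∧ sat M b s := by
  show ((sat M a s → (sat M b s → False)) → False) ↔ _
  tauto

lemma sat_ex' {S} (M : Kripke S) (a : CTL) (s : S) :
    sat M (CTL.ex a) s ↔ ∃ t, M.rel s t ∧ sat M a t := by
  show (¬ ∀ t, M.rel s t → (sat M a t → False)) ↔ _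
  push_neg
  simp

lemma sat_ag' {S} (M : Kripke S) (a : CTL) (s : S) :
    sat M (CTL.ag a) s ↔ ∀ π, isPath M π → π 0 = s → ∀ i, sat M a (π i) := by
  show (¬ ∃ π, isPath M π ∧ π 0 = s ∧
      ∃ i, sat M (CTL.neg a) (π i) ∧ ∀ j, j < i → sat M CTL.top (π j)) ↔ _
  constructor
  · intro h π hπ h0 i
    by_contra hc
    exact h ⟨π, hπ, h0, i, hc, fun j _ hf => hf⟩
  · rintro h ⟨π, hπ, h0, i, hi, -⟩
    exact hi (h π hπ h0 i)

lemma ag_iff_reach (k : ℕ) (a : CTL) (s : Fin (2*k+2)) :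
    sat (chainModel k) (CTL.ag a) s ↔
      ∀ t, ReflTransGen (chainRel k) s t → sat (chainModel k) a t := by
  rw [sat_ag']
  have hrefl : ∀ u : Fin (2*k+2), chainRel k u u := fun u => Or.inr (Or.inr rfl)
  constructor
  · intro h t ht
    have key : ∀ π, isPath (chainModel k) π → π 0 = t → ∀ i, sat (chainModel k) a (π i) := by
      induction ht with
      | refl => exact h
      | @tail b c hab hbc ih =>
        intro π hπ h0 i
        have hpath : isPath (chainModel k) (fun n => Nat.rec b (fun n _ => π n) n) := by
          intro n
          cases n with
          | zero => show chainRel k b (π 0); rw [h0]; exact hbc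
          | succ n => exact hπ n
        exact ih (fun n => Nat.rec b (fun n _ => π n) n) hpath rfl (i+1)
    have := key (fun _ => t) (fun _ => hrefl t) rfl 0
    exact this
  · intro h π hπ h0 i
    apply h
    induction i with
    | zero => rw [h0]
    | succ i ih => exact ReflTransGen.tail ih (hπ i)

lemma chainRel_iff (k : ℕ) (s t : Fin (2*k+2)) :
    chainRel k s t ↔ ((s.val = 0 ∧ (t.val = 1 ∨ t.val = 2)) ∨
      (2 ≤ s.val ∧ s.val ≤ 2*k ∧ t.val = s.val + 1) ∨ t.val = s.val) := by
  unfold chainRel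
  rw [Fin.ext_iff]

lemma chain_up (k : ℕ) : ∀ n (s t : Fin (2*k+2)), 2 ≤ s.val → s.val ≤ t.val →
    t.val - s.val = n → ReflTransGen (chainRel k) s t := by
  intro n
  induction n with
  | zero =>
    intro s t h1 h2 h3
    have : t = s := Fin.ext (by omega)
    subst this
    exact ReflTransGen.refl
  | succ n ih =>
    intro s t h1 h2 h3
    have ht := t.isLt
    have hs : s.val + 1 < 2*k+2 := by omega
    refine ReflTransGen.head ?_ (ih ⟨s.val+1, hs⟩ t (by simp; omega) (by simp; omega) (by simp; omega))
    exact Or.inr (Or.inl ⟨h1, by omega, rfl⟩)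

lemma reach_char (k : ℕ) (s t : Fin (2*k+2)) :
    ReflTransGen (chainRel k) s t ↔
      (t.val = s.val ∨ s.val = 0 ∨ (2 ≤ s.val ∧ s.val ≤ t.val)) := by
  constructor
  · intro h
    induction h with
    | refl => left; rfl
    | tail hab hbc ih =>
      rw [chainRel_iff] at hbc
      omega
  · intro h
    have ht := t.isLt
    rcases h with h | h | ⟨h1, h2⟩
    · have : t = s := Fin.ext h
      subst this; exact ReflTransGen.refl
    · rcases Nat.lt_or_ge t.val 1 with h0 | h0
      · have : t = s := Fin.ext (by omega)
        subst this; exact ReflTransGen.refl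
      rcases Nat.lt_or_ge t.val 2 with h1 | h1
      · refine ReflTransGen.single ?_
        rw [chainRel_iff]; omega
      · refine ReflTransGen.head ?_ (chain_up k (t.val - 2) ⟨2, by omega⟩ t (by simp) (by simp; omega) (by simp))
        rw [chainRel_iff]; simp [-Fin.val_eq_zero_iff]; omega
    · exact chain_up k (t.val - s.val) s t h1 h2 rfl

lemma sat_var0 (k : ℕ) (x : Fin (2*k+2)) :
    sat (chainModel k) (.var 0) x ↔ (x.val = 0 ∨ (3 ≤ x.val ∧ x.val % 2 = 1)) := by
  show (0 = 0 ∧ chainVal k x) ↔ _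
  simp [chainVal]

lemma chi_zero (k : ℕ) (hk : 1 ≤ k) (x : Fin (2*k+2)) :
    sat (chainModel k) (chi 0) x ↔ x.val = 2*k+1 := by
  show sat (chainModel k) (CTL.ag (.var 0)) x ↔ _
  rw [ag_iff_reach]
  have hx := x.isLt
  constructor
  · intro h
    by_contra hne
    have hxx := h x ReflTransGen.refl
    rw [sat_var0] at hxx
    rcases hxx with h0 | ⟨h3, hodd⟩
    · have := h ⟨1, by omega⟩ ((reach_char k x _).mpr (by simp [-Fin.val_eq_zero_iff]; omega))
      rw [sat_var0] at this; simp at this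
    · have hlt : x.val + 1 < 2*k+2 := by omega
      have := h ⟨x.val+1, hlt⟩ ((reach_char k x _).mpr (by simp; omega))
      rw [sat_var0] at this; simp at this; omega
  · intro hxv t ht
    rw [reach_char] at ht
    rw [sat_var0]
    have := t.isLt
    omega

lemma chi_char (k : ℕ) (hk : 1 ≤ k) : ∀ j (x : Fin (2*k+2)),
    sat (chainModel k) (chi j) x ↔
      ((j < k ∧ x.val + 2*j = 2*k+1) ∨ (j = k ∧ x.val = 0)) := by
  intro j
  induction j with
  | zero =>
    intro x
    rw [chi_zero k hk]
    omega
  | succ j ih =>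
    intro x
    show sat (chainModel k)
      (CTL.conj (.var 0) (CTL.ex (CTL.conj (CTL.neg (.var 0)) (CTL.ex (chi j))))) x ↔ _
    rw [sat_conj', sat_ex', sat_var0]
    have hx := x.isLt
    constructor
    · rintro ⟨hp, t, hrel, hmid⟩
      rw [sat_conj', sat_neg', sat_var0, sat_ex'] at hmid
      obtain ⟨hnp, u, hrel2, hu⟩ := hmid
      rw [ih] at hu
      have hrel' : chainRel k x t := hrel
      have hrel2' : chainRel k t u := hrel2
      rw [chainRel_iff] at hrel' hrel2'
      omega
    · rintro (⟨hjk, hxv⟩ | ⟨hjk, hxv⟩)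
      · refine ⟨by omega, ⟨x.val+1, by omega⟩, ?_, ?_⟩
        · show chainRel k x _
          rw [chainRel_iff]; simp; omega
        · rw [sat_conj', sat_neg', sat_var0, sat_ex']
          refine ⟨by simp; omega, ⟨x.val+2, by omega⟩, ?_, ?_⟩
          · show chainRel k _ _
            rw [chainRel_iff]; simp; omega
          · rw [ih]; simp; omega
      · refine ⟨by omega, ⟨2, by omega⟩, ?_, ?_⟩
        · show chainRel k x _
          rw [chainRel_iff]; simp [-Fin.val_eq_zero_iff]; omega
        · rw [sat_conj', sat_neg', sat_var0, sat_ex']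
          refine ⟨by simp, ⟨3, by omega⟩, ?_, ?_⟩
          · show chainRel k _ _
            rw [chainRel_iff]; simp; omega
          · rw [ih]; simp; omega

lemma agnp (k : ℕ) (hk : 1 ≤ k) (x : Fin (2*k+2)) :
    sat (chainModel k) (CTL.ag (CTL.neg (.var 0))) x ↔ x.val = 1 := by
  rw [ag_iff_reach]
  have hx := x.isLt
  constructor
  · intro h
    by_contra hne
    rcases Nat.lt_or_ge x.val 2 with h2 | h2
    · have := h x ReflTransGen.refl
      rw [sat_neg', sat_var0] at this
      omega
    · have := h ⟨2*k+1, by omega⟩ ((reach_char k x _).mpr (by simp; omega))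
      rw [sat_neg', sat_var0] at this
      simp at this
      omega
  · intro h t ht
    rw [reach_char] at ht
    rw [sat_neg', sat_var0]
    omega

lemma exagnp (k : ℕ) (hk : 1 ≤ k) (x : Fin (2*k+2)) :
    sat (chainModel k) (CTL.ex (CTL.ag (CTL.neg (.var 0)))) x ↔ x.val ≤ 1 := by
  rw [sat_ex']
  constructor
  · rintro ⟨t, hrel, ht⟩
    rw [agnp k hk] at ht
    have hrel' : chainRel k x t := hrel
    rw [chainRel_iff] at hrel'
    omega
  · intro h
    rcases Nat.lt_or_ge x.val 1 with h0 | h0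
    · refine ⟨⟨1, by omega⟩, ?_, ?_⟩
      · show chainRel k x _
        rw [chainRel_iff]; simp [-Fin.val_eq_zero_iff]; omega
      · rw [agnp k hk]
    · refine ⟨x, Or.inr (Or.inr rfl), ?_⟩
      rw [agnp k hk]; omega

end Aux

/-- In the chain model M_k, the formula A_m is true at x iff k = m and x is the root. -/
theorem chain_model_Aform (m k : ℕ) (hm : 1 ≤ m) (hk : 1 ≤ k) (x : Fin (2 * k + 2)) :
    sat (chainModel k) (Aform m) x ↔ k = m ∧ x = chainRoot k := by
  show sat (chainModel k) (CTL.conj (chi m) (CTL.ex (CTL.ag (CTL.neg (.var 0))))) x ↔ _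
  rw [sat_conj', chi_char k hk m x, exagnp k hk x]
  constructor
  · rintro ⟨h1, h2⟩
    have hkm : k = m ∧ x.val = 0 := by omega
    exact ⟨hkm.1, Fin.ext (by simpa [chainRoot] using hkm.2)⟩
  · rintro ⟨h1, h2⟩
    subst h2
    simp [chainRoot]
    omega
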